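/- Let 0 < α < 1, s < −1/2, and t > 0 be fixed. For functions φ, ψ : ℝ → ℂ whose Fourier transforms φ̂, ψ̂ are bounded measurable functions with compact support, define A(ξ, ξ₁, ξ₂) = ξ₁³ + α ξ₂³ + α (ξ−ξ₁−ξ₂)³ − ξ³ and F(ξ) = ξ · ∫_{ℝ²} φ̂(ξ₁) ψ̂(ξ₂) ψ̂(ξ−ξ₁−ξ₂) · E(t, A(ξ,ξ₁,ξ₂)) dξ₁ dξ₂, where E(t, A) = (e^{itA} − 1)/(iA) if A ≠ 0 and E(t, 0) = t. Then there is no constant C > 0 such that ‖⟨ξ⟩^{s} F(ξ)‖_{L²_ξ(ℝ)} ≤ C ‖φ‖_{H^s(ℝ)} ‖ψ‖²_{H^s(ℝ)} holds for all such φ, ψ; that is, for every C > 0 there exist φ, ψ with bounded compactly supported Fourier transforms violating the inequality. (Up to the unimodular factor −6ie^{itξ³}, F(ξ) is the spatial Fourier transform of the third derivative at the origin of the data-to-solution map for the coupled mKdV system v_t + v_{xxx} + (vw²)_x = 0, w_t + α w_{xxx} + (v²w)_x = 0 with data (δφ, δψ); hence this data-to-solution map is not C³ at the origin from H^s × H^s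 to C([0,T]; H^s × H^s) when s < −1/2.) -/

import Mathlib

set_option maxHeartbeats 1000000

open MeasureTheory
open scoped ENNReal NNReal

/-- `g` is a bounded measurable function with compact support on `ℝ`. -/
def BddMeasCompSupp1 (g : ℝ → ℂ) : Prop :=
  Measurable g ∧ (∃ M : ℝ, ∀ x, ‖g x‖ ≤ M) ∧ HasCompactSupport g

/-- The resonance function `A(ξ, ξ₁, ξ₂) = ξ₁³ + αξ₂³ + α(ξ-ξ₁-ξ₂)³ - ξ³`. -/
def phaseA (α ξ ξ₁ ξ₂ : ℝ) : ℝ :=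
  ξ₁ ^ 3 + α * ξ₂ ^ 3 + α * (ξ - ξ₁ - ξ₂) ^ 3 - ξ ^ 3

/-- `E(t, A) = (e^{itA} - 1)/(iA)` for `A ≠ 0`, and `E(t, 0) = t`. -/
noncomputable def Efun (t A : ℝ) : ℂ :=
  if A = 0 then (t : ℂ)
  else (Complex.exp (Complex.I * ((t * A : ℝ) : ℂ)) - 1) / (Complex.I * ((A : ℝ) : ℂ))

lemma measurable_Efun (t : ℝ) : Measurable (Efun t) := by
  unfold Efun
  apply Measurable.ite
  · exact measurableSet_eq
  · exact measurable_const
  · fun_prop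

lemma Efun_re (t A : ℝ) (hA : A ≠ 0) : (Efun t A).re = Real.sin (t * A) / A := by
  rw [Efun, if_neg hA]
  have h1 : Complex.I * ((t * A : ℝ) : ℂ) = ((t * A : ℝ) : ℂ) * Complex.I := by ring
  rw [h1]
  rw [Complex.div_re]
  simp [Complex.exp_ofReal_mul_I_re, Complex.exp_ofReal_mul_I_im, Complex.normSq_mul,
    Complex.normSq_I]
  rw [← Complex.ofReal_mul, Complex.exp_ofReal_mul_I_im]
  field_simp

lemma re_Efun_ge {t A : ℝ} (ht : 0 < t) (h : |t * A| ≤ 1) : t / 2 ≤ (Efun t A).re := by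
  rcases eq_or_ne A 0 with rfl | hA
  · simp [Efun]; linarith
  · rw [Efun_re t A hA]
    have key : ∀ x : ℝ, 0 < x → x ≤ 1 → x / 2 ≤ Real.sin x := by
      intro x hx hx1
      have := Real.sin_gt_sub_cube hx
      nlinarith [pow_le_pow_left₀ hx.le hx1 3, sq_nonneg x]
    rcases lt_or_gt_of_ne hA with hneg | hpos
    · have hx : 0 < t * (-A) := by
        have : 0 < -A := by linarith
        positivity
      have hx1 : t * (-A) ≤ 1 := by rw [abs_le] at h; linarith
      have hk := key _ hx hx1
      have hsin : Real.sin (t * A) = - Real.sin (t * (-A)) := by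
        rw [show t * A = -(t * (-A)) by ring, Real.sin_neg]
      rw [hsin, show -Real.sin (t * -A) / A = Real.sin (t * -A) / (-A) by
        rw [div_neg, neg_div]]
      rw [le_div_iff₀ (by linarith : (0:ℝ) < -A)]
      nlinarith
    · have hx : 0 < t * A := by positivity
      have hx1 : t * A ≤ 1 := by rw [abs_le] at h; linarith
      have h2 := key _ hx hx1
      rw [le_div_iff₀ hpos]
      nlinarith

lemma norm_Efun_le {t A : ℝ} (ht : 0 ≤ t) (h : |t * A| ≤ 1) : ‖Efun t A‖ ≤ 2 * t := by
  rcases eq_or_ne A 0 with rfl | hA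
  · simp [Efun, abs_of_nonneg ht]; linarith
  · rw [Efun, if_neg hA, norm_div]
    have h1 : ‖Complex.I * ((A : ℝ) : ℂ)‖ = |A| := by
      simp
    have h2 : ‖Complex.exp (Complex.I * ((t * A : ℝ) : ℂ)) - 1‖ ≤ 2 * |t * A| := by
      have hle : ‖Complex.I * ((t * A : ℝ) : ℂ)‖ ≤ 1 := by
        simpa [abs_mul] using h
      have := Complex.norm_exp_sub_one_le hle
      calc ‖Complex.exp (Complex.I * ((t * A : ℝ) : ℂ)) - 1‖
          ≤ 2 * ‖Complex.I * ((t*A:ℝ):ℂ)‖ := this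
        _ = 2 * |t * A| := by simp [abs_mul]
    rw [h1]
    rw [div_le_iff₀ (abs_pos.mpr hA)]
    calc ‖Complex.exp (Complex.I * ((t * A : ℝ) : ℂ)) - 1‖ ≤ 2 * |t * A| := h2
      _ = 2 * t * |A| := by rw [abs_mul, abs_of_nonneg ht]; ring

lemma cfg_bound {α N γ u v w : ℝ} (hα0 : 0 ≤ α) (hα1 : α ≤ 1) (hN : 1 ≤ N) (hγ1 : γ ≤ 1)
    (hu0 : 0 ≤ u) (hu1 : u ≤ γ) (hv0 : 0 ≤ v) (hv1 : v ≤ γ) (hw0 : 0 ≤ w) (hw1 : w ≤ γ) :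
    |(N+u)^3 + α*(N+v)^3 + α*(-N+w)^3 - (N+(u+v+w))^3| ≤ 120 * N^2 * γ := by
  have hγ0 : 0 ≤ γ := le_trans hu0 hu1
  have hN0 : 0 < N := lt_of_lt_of_le one_pos hN
  have hid : (N+u)^3 + α*(N+v)^3 + α*(-N+w)^3 - (N+(u+v+w))^3
      = 3*N^2*((α-1)*(v+w)) + 3*N*(u^2 + α*v^2 - α*w^2 - (u+v+w)^2)
        + (u^3 + α*v^3 + α*w^3 - (u+v+w)^3) := by ring
  rw [hid]
  have h1 : |3*N^2*((α-1)*(v+w))| ≤ 6*N^2*γ := by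
    have hin : |(α-1)*(v+w)| ≤ 2*γ := by
      rw [abs_mul, abs_of_nonpos (by linarith : α - 1 ≤ 0), abs_of_nonneg (by linarith)]
      nlinarith
    calc |3*N^2*((α-1)*(v+w))| = 3*N^2 * |(α-1)*(v+w)| := by
          rw [abs_mul, abs_of_nonneg (by positivity)]
      _ ≤ 3*N^2*(2*γ) := mul_le_mul_of_nonneg_left hin (by positivity)
      _ = 6*N^2*γ := by ring
  have h2 : |3*N*(u^2 + α*v^2 - α*w^2 - (u+v+w)^2)| ≤ 36*N^2*γ := by
    have hu2 : u^2 ≤ γ^2 := by nlinarith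
    have hv2 : v^2 ≤ γ^2 := by nlinarith
    have hw2 : w^2 ≤ γ^2 := by nlinarith
    have hσ2 : (u+v+w)^2 ≤ 9*γ^2 := by nlinarith
    have hin : |u^2 + α*v^2 - α*w^2 - (u+v+w)^2| ≤ 12*γ^2 := by
      rw [abs_le]
      constructor <;> nlinarith [sq_nonneg u, sq_nonneg (u+v+w), mul_nonneg hα0 (sq_nonneg v),
        mul_nonneg hα0 (sq_nonneg w)]
    calc |3*N*(u^2 + α*v^2 - α*w^2 - (u+v+w)^2)| = 3*N * |u^2 + α*v^2 - α*w^2 - (u+v+w)^2| := by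
          rw [abs_mul, abs_of_nonneg (by positivity)]
      _ ≤ 3*N*(12*γ^2) := mul_le_mul_of_nonneg_left hin (by positivity)
      _ ≤ 36*N^2*γ := by
          have key : γ*γ ≤ N*γ := mul_le_mul_of_nonneg_right (le_trans hγ1 hN) hγ0
          nlinarith
  have h3 : |u^3 + α*v^3 + α*w^3 - (u+v+w)^3| ≤ 30*N^2*γ := by
    have hu3 : u^3 ≤ γ^3 := pow_le_pow_left₀ hu0 hu1 3
    have hv3 : v^3 ≤ γ^3 := pow_le_pow_left₀ hv0 hv1 3
    have hw3 : w^3 ≤ γ^3 := pow_le_pow_left₀ hw0 hw1 3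
    have hσ3 : (u+v+w)^3 ≤ 27*γ^3 := by
      have h1 := pow_le_pow_left₀ (by linarith : (0:ℝ) ≤ u+v+w) (by linarith : u+v+w ≤ 3*γ) 3
      have h2 : (3*γ)^3 = 27*γ^3 := by ring
      linarith
    have hσ0 : 0 ≤ (u+v+w)^3 := by positivity
    have hin : |u^3 + α*v^3 + α*w^3 - (u+v+w)^3| ≤ 30*γ^3 := by
      rw [abs_le]
      constructor <;> nlinarith [mul_nonneg hα0 (by positivity : (0:ℝ) ≤ v^3),
        mul_nonneg hα0 (by positivity : (0:ℝ) ≤ w^3), pow_nonneg hu0 3,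
        mul_le_mul_of_nonneg_left hv3 hα0, mul_le_mul_of_nonneg_left hw3 hα0]
    have hg : γ^3 ≤ N^2*γ := by
      have k1 : γ*γ ≤ 1 := by nlinarith
      have k2 : (1:ℝ) ≤ N^2 := by nlinarith
      nlinarith
    have : (30:ℝ)*γ^3 ≤ 30*N^2*γ := by linarith
    linarith
  calc |3*N^2*((α-1)*(v+w)) + 3*N*(u^2 + α*v^2 - α*w^2 - (u+v+w)^2)
        + (u^3 + α*v^3 + α*w^3 - (u+v+w)^3)|
      ≤ |3*N^2*((α-1)*(v+w)) + 3*N*(u^2 + α*v^2 - α*w^2 - (u+v+w)^2)|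
        + |u^3 + α*v^3 + α*w^3 - (u+v+w)^3| := abs_add_le _ _
    _ ≤ |3*N^2*((α-1)*(v+w))| + |3*N*(u^2 + α*v^2 - α*w^2 - (u+v+w)^2)|
        + |u^3 + α*v^3 + α*w^3 - (u+v+w)^3| := by
          linarith [abs_add_le (3*N^2*((α-1)*(v+w))) (3*N*(u^2 + α*v^2 - α*w^2 - (u+v+w)^2))]
    _ ≤ 120 * N^2 * γ := by
        have : (0:ℝ) ≤ N^2*γ := by positivity
        linarith

lemma phaseA_swap (α ξ ξ₁ ξ₂ : ℝ) : phaseA α ξ ξ₁ (ξ - ξ₁ - ξ₂) = phaseA α ξ ξ₁ ξ₂ := by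
  unfold phaseA; ring

lemma phaseA_bound {α N γ ξ ξ₁ ξ₂ : ℝ} (hα0 : 0 ≤ α) (hα1 : α ≤ 1) (hN : 1 ≤ N) (hγ1 : γ ≤ 1)
    (h1 : ξ₁ ∈ Set.Ioc N (N+γ)) (h2 : ξ₂ ∈ Set.Ioc N (N+γ))
    (h3 : ξ - ξ₁ - ξ₂ ∈ Set.Ioc (-N) (-N+γ)) :
    |phaseA α ξ ξ₁ ξ₂| ≤ 120 * N^2 * γ := by
  obtain ⟨h1a, h1b⟩ := h1
  obtain ⟨h2a, h2b⟩ := h2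
  obtain ⟨h3a, h3b⟩ := h3
  have hrw : phaseA α ξ ξ₁ ξ₂
      = (N+(ξ₁-N))^3 + α*(N+(ξ₂-N))^3 + α*(-N+(ξ-ξ₁-ξ₂+N))^3
        - (N+((ξ₁-N)+(ξ₂-N)+(ξ-ξ₁-ξ₂+N)))^3 := by unfold phaseA; ring
  rw [hrw]
  exact cfg_bound hα0 hα1 hN hγ1 (by linarith) (by linarith) (by linarith) (by linarith)
    (by linarith) (by linarith)

lemma support_classify {N γ ξ p₁ p₂ : ℝ} (hN : 2 ≤ N) (hγ0 : 0 < γ) (hγ1 : γ ≤ 1)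
    (hξ : ξ ∈ Set.Ioc (N+γ) (N+5*γ/4))
    (h1 : p₁ ∈ Set.Ioc N (N+γ))
    (h2 : p₂ ∈ Set.Ioc (-N) (-N+γ) ∪ Set.Ioc N (N+γ))
    (h3 : ξ-p₁-p₂ ∈ Set.Ioc (-N) (-N+γ) ∪ Set.Ioc N (N+γ)) :
    (p₂ ∈ Set.Ioc N (N+γ) ∧ ξ-p₁-p₂ ∈ Set.Ioc (-N) (-N+γ)) ∨
    (p₂ ∈ Set.Ioc (-N) (-N+γ) ∧ ξ-p₁-p₂ ∈ Set.Ioc N (N+γ)) := by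
  obtain ⟨hξa, hξb⟩ := hξ
  obtain ⟨h1a, h1b⟩ := h1
  rcases h2 with h2 | h2 <;> rcases h3 with h3 | h3
  · exfalso
    obtain ⟨h2a, h2b⟩ := h2; obtain ⟨h3a, h3b⟩ := h3
    linarith
  · exact Or.inr ⟨h2, h3⟩
  · exact Or.inl ⟨h2, h3⟩
  · exfalso
    obtain ⟨h2a, h2b⟩ := h2; obtain ⟨h3a, h3b⟩ := h3
    linarith

theorem stmt_19 (α s t : ℝ) (hα0 : 0 < α) (hα1 : α < 1) (hs : s < -(1/2))
    (ht : 0 < t) :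
    ∀ C : ℝ, 0 < C →
      ∃ g h : ℝ → ℂ,  -- the Fourier transforms `φ̂` and `ψ̂`
        BddMeasCompSupp1 g ∧ BddMeasCompSupp1 h ∧
        ¬ (eLpNorm (fun ξ : ℝ => (1 + |ξ|) ^ s *
              ‖(ξ : ℂ) * ∫ p : ℝ × ℝ,
                  g p.1 * h p.2 * h (ξ - p.1 - p.2) * Efun t (phaseA α ξ p.1 p.2)‖)
            2 volume ≤
          ENNReal.ofReal C *
            (eLpNorm (fun ξ : ℝ => (1 + |ξ|) ^ s * ‖g ξ‖) 2 volume *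
             eLpNorm (fun ξ : ℝ => (1 + |ξ|) ^ s * ‖h ξ‖) 2 volume ^ 2)) := by
  intro C hC
  have hε0 : 0 < min 1 (1/(120*t)) := lt_min one_pos (by positivity)
  set ε : ℝ := min 1 (1/(120*t)) with hεdef
  have hε1 : ε ≤ 1 := min_le_left _ _
  have hεt : 120 * t * ε ≤ 1 := by
    have h1 : ε ≤ 1/(120*t) := min_le_right _ _
    have h2 : 120 * t * ε ≤ 120 * t * (1/(120*t)) :=
      mul_le_mul_of_nonneg_left h1 (by positivity)
    have h3 : 120 * t * (1/(120*t)) = 1 := by field_simp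
    linarith
  set e : ℝ := -1 - 2*s with hedef
  have he : 0 < e := by rw [hedef]; linarith
  have h3s : (0:ℝ) < 3 ^ s := Real.rpow_pos_of_pos (by norm_num) s
  set K : ℝ := 64 * C / (3 ^ s * t * ε) with hKdef
  have hK : 0 < K := by positivity
  set N : ℝ := max 2 ((K+1) ^ (1/e)) with hNdef
  have hN2 : 2 ≤ N := le_max_left _ _
  have hN1 : 1 ≤ N := by linarith
  have hN0 : 0 < N := by linarith
  have hNK : K < N ^ e := by
    have h1 : (K+1) ^ (1/e) ≤ N := le_max_right _ _
    have h2 : ((K+1) ^ (1/e)) ^ e ≤ N ^ e :=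
      Real.rpow_le_rpow (Real.rpow_nonneg (by linarith) _) h1 he.le
    have h3 : ((K+1) ^ (1/e)) ^ e = K + 1 := by
      rw [← Real.rpow_mul (by linarith : (0:ℝ) ≤ K+1), one_div, inv_mul_cancel₀ he.ne',
        Real.rpow_one]
    rw [h3] at h2
    linarith
  set γ : ℝ := ε / N^2 with hγdef
  have hγ0 : 0 < γ := by positivity
  have hγN2 : γ * N^2 = ε := by
    rw [hγdef]; field_simp
  have hγ1 : γ ≤ 1 := by
    rw [hγdef, div_le_one (by positivity)]
    nlinarith
  have hAt : t * (120 * N^2 * γ) ≤ 1 := by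
    have h1 : 120 * N^2 * γ = 120 * ε := by rw [← hγN2]; ring
    rw [h1]; linarith
  set Ig : Set ℝ := Set.Ioc N (N+γ) with hIgdef
  set Ineg : Set ℝ := Set.Ioc (-N) (-N+γ) with hInegdef
  set Ih : Set ℝ := Ineg ∪ Ig with hIhdef
  have hIgmeas : MeasurableSet Ig := measurableSet_Ioc
  have hIhmeas : MeasurableSet Ih := MeasurableSet.union measurableSet_Ioc measurableSet_Ioc
  refine ⟨Ig.indicator (fun _ => 1), Ih.indicator (fun _ => 1), ?_, ?_, ?_⟩
  · refine ⟨measurable_const.indicator hIgmeas, ⟨1, ?_⟩, ?_⟩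
    · intro x
      by_cases hx : x ∈ Ig <;> simp [Set.indicator_apply, hx]
    · apply HasCompactSupport.intro (isCompact_Icc (a := N) (b := N+γ))
      intro x hx
      exact Set.indicator_of_notMem (fun hmem => hx (Set.Ioc_subset_Icc_self hmem)) _
  · refine ⟨measurable_const.indicator hIhmeas, ⟨1, ?_⟩, ?_⟩
    · intro x
      by_cases hx : x ∈ Ih <;> simp [Set.indicator_apply, hx]
    · apply HasCompactSupport.intro (isCompact_Icc (a := -N) (b := N+γ))
      intro x hx
      refine Set.indicator_of_notMem (fun hmem => hx ?_) _
      rcases hmem with hm | hm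
      · exact ⟨hm.1.le, by linarith [hm.2]⟩
      · exact ⟨by linarith [hm.1], hm.2⟩
  · intro hle
    set S : Set ℝ := Set.Ioc (N+γ) (N+5*γ/4) with hSdef
    have hc0 : 0 < (3*N) ^ s * (N * (t * γ^2 / 16)) := by
      have := Real.rpow_pos_of_pos (show (0:ℝ) < 3*N by positivity) s
      positivity
    set c : ℝ := (3*N) ^ s * (N * (t * γ^2 / 16)) with hcdef
    -- key pointwise lower bound on S
    have key : ∀ ξ ∈ S, c ≤ (1 + |ξ|) ^ s *
        ‖(ξ:ℂ) * ∫ p : ℝ × ℝ,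
            Ig.indicator (fun _ => (1:ℂ)) p.1 * Ih.indicator (fun _ => (1:ℂ)) p.2 *
            Ih.indicator (fun _ => (1:ℂ)) (ξ - p.1 - p.2) * Efun t (phaseA α ξ p.1 p.2)‖ := by
      intro ξ hξ
      set f : ℝ × ℝ → ℂ := fun p =>
        Ig.indicator (fun _ => (1:ℂ)) p.1 * Ih.indicator (fun _ => (1:ℂ)) p.2 *
          Ih.indicator (fun _ => (1:ℂ)) (ξ - p.1 - p.2) * Efun t (phaseA α ξ p.1 p.2) with hfdef
      -- phase bound on the support
      have hAb : ∀ p : ℝ × ℝ, p.1 ∈ Ig → p.2 ∈ Ih → (ξ - p.1 - p.2) ∈ Ih →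
          |t * phaseA α ξ p.1 p.2| ≤ 1 := by
        intro p h1 h2 h3
        have habs : |phaseA α ξ p.1 p.2| ≤ 120 * N^2 * γ := by
          rcases support_classify hN2 hγ0 hγ1 hξ h1 h2 h3 with ⟨ha, hb⟩ | ⟨ha, hb⟩
          · exact phaseA_bound hα0.le hα1.le hN1 hγ1 h1 ha hb
          · have h3' : ξ - p.1 - (ξ - p.1 - p.2) ∈ Set.Ioc (-N) (-N+γ) := by
              rw [show ξ - p.1 - (ξ - p.1 - p.2) = p.2 by ring]; exact ha
            have := phaseA_bound hα0.le hα1.le hN1 hγ1 h1 hb h3'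
            rwa [phaseA_swap α ξ p.1 p.2] at this
        rw [abs_mul, abs_of_nonneg ht.le]
        calc t * |phaseA α ξ p.1 p.2| ≤ t * (120*N^2*γ) :=
              mul_le_mul_of_nonneg_left habs ht.le
          _ = t * (120 * N^2 * γ) := by ring
          _ ≤ 1 := hAt
      -- the rectangle
      set R : Set (ℝ×ℝ) := (Set.Ioc N (N+γ/4)) ×ˢ (Set.Ioc (N+γ/4) (N+3*γ/4)) with hRdef
      have hRmeas : MeasurableSet R := (measurableSet_Ioc).prod measurableSet_Ioc
      obtain ⟨hξa, hξb⟩ := hξ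
      have hRsub : ∀ p : ℝ×ℝ, p ∈ R → p.1 ∈ Ig ∧ p.2 ∈ Ih ∧ (ξ - p.1 - p.2) ∈ Ineg := by
        intro p hp
        obtain ⟨⟨h1a, h1b⟩, ⟨h2a, h2b⟩⟩ := hp
        refine ⟨⟨h1a, by linarith⟩, Or.inr ⟨by linarith, by linarith⟩, ⟨by linarith, by linarith⟩⟩
      -- pointwise real-part bound
      have hpoint : ∀ p : ℝ×ℝ, R.indicator (fun _ => t/2) p ≤ (f p).re := by
        intro p
        have hind : R.indicator (fun _ => t/2) p ≤ t/2 := by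
          by_cases hp : p ∈ R
          · rw [Set.indicator_of_mem hp]
          · rw [Set.indicator_of_notMem hp]; linarith
        by_cases h1 : p.1 ∈ Ig
        · by_cases h2 : p.2 ∈ Ih
          · by_cases h3 : (ξ - p.1 - p.2) ∈ Ih
            · have hfp : f p = Efun t (phaseA α ξ p.1 p.2) := by
                rw [hfdef]
                simp only [Set.indicator_of_mem h1, Set.indicator_of_mem h2,
                  Set.indicator_of_mem h3, one_mul]
              have := re_Efun_ge ht (hAb p h1 h2 h3)
              rw [hfp]
              linarith
            · have hfp : f p = 0 := by
                rw [hfdef]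
                simp only [Set.indicator_of_notMem h3, mul_zero, zero_mul]
              have hnR : p ∉ R := fun hp => h3 (Or.inl (hRsub p hp).2.2)
              rw [hfp, Set.indicator_of_notMem hnR]
              simp
          · have hfp : f p = 0 := by
              rw [hfdef]
              simp only [Set.indicator_of_notMem h2, mul_zero, zero_mul]
            have hnR : p ∉ R := fun hp => h2 (hRsub p hp).2.1
            rw [hfp, Set.indicator_of_notMem hnR]
            simp
        · have hfp : f p = 0 := by
            rw [hfdef]
            simp only [Set.indicator_of_notMem h1, mul_zero, zero_mul]
          have hnR : p ∉ R := fun hp => h1 (hRsub p hp).1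
          rw [hfp, Set.indicator_of_notMem hnR]
          simp
      -- integrability
      have hfmeas : Measurable f := by
        apply Measurable.mul
        apply Measurable.mul
        apply Measurable.mul
        · exact (measurable_const.indicator hIgmeas).comp measurable_fst
        · exact (measurable_const.indicator hIhmeas).comp measurable_snd
        · exact (measurable_const.indicator hIhmeas).comp
            (by fun_prop : Measurable fun p : ℝ×ℝ => ξ - p.1 - p.2)
        · exact (measurable_Efun t).comp
            (by unfold phaseA; fun_prop : Measurable fun p : ℝ×ℝ => phaseA α ξ p.1 p.2)
      have hKbig : MeasurableSet (Ig ×ˢ Ih) := hIgmeas.prod hIhmeas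
      have hvolKbig : volume (Ig ×ˢ Ih) < ⊤ := by
        rw [Measure.volume_eq_prod, Measure.prod_prod]
        apply ENNReal.mul_lt_top
        · rw [hIgdef, Real.volume_Ioc]; exact ENNReal.ofReal_lt_top
        · rw [hIhdef, hIgdef, hInegdef]
          apply lt_of_le_of_lt (measure_union_le _ _)
          rw [Real.volume_Ioc, Real.volume_Ioc]
          exact ENNReal.add_lt_top.mpr ⟨ENNReal.ofReal_lt_top, ENNReal.ofReal_lt_top⟩
      have hDint : Integrable ((Ig ×ˢ Ih).indicator (fun _ => (2*t : ℝ))) volume := by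
        rw [integrable_indicator_iff hKbig]
        exact integrableOn_const hvolKbig.ne
      have hfint : Integrable f volume := by
        apply Integrable.mono' hDint hfmeas.aestronglyMeasurable
        apply ae_of_all
        intro p
        by_cases h1 : p.1 ∈ Ig
        · by_cases h2 : p.2 ∈ Ih
          · have hpK : p ∈ Ig ×ˢ Ih := ⟨h1, h2⟩
            rw [Set.indicator_of_mem hpK]
            by_cases h3 : (ξ - p.1 - p.2) ∈ Ih
            · have hfp : f p = Efun t (phaseA α ξ p.1 p.2) := by
                rw [hfdef]
                simp only [Set.indicator_of_mem h1, Set.indicator_of_mem h2,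
                  Set.indicator_of_mem h3, one_mul]
              rw [hfp]
              exact norm_Efun_le ht.le (hAb p h1 h2 h3)
            · have hfp : f p = 0 := by
                rw [hfdef]
                simp only [Set.indicator_of_notMem h3, mul_zero, zero_mul]
              rw [hfp]; simp; positivity
          · have hfp : f p = 0 := by
              rw [hfdef]
              simp only [Set.indicator_of_notMem h2, mul_zero, zero_mul]
            rw [hfp]
            simp only [norm_zero]
            by_cases hpK : p ∈ Ig ×ˢ Ih
            · rw [Set.indicator_of_mem hpK]; positivity
            · rw [Set.indicator_of_notMem hpK]
        · have hfp : f p = 0 := by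
            rw [hfdef]
            simp only [Set.indicator_of_notMem h1, mul_zero, zero_mul]
          rw [hfp]
          simp only [norm_zero]
          by_cases hpK : p ∈ Ig ×ˢ Ih
          · rw [Set.indicator_of_mem hpK]; positivity
          · rw [Set.indicator_of_notMem hpK]
      -- integral lower bound
      have hindint : Integrable (R.indicator (fun _ => (t/2 : ℝ))) volume := by
        rw [integrable_indicator_iff hRmeas]
        refine integrableOn_const (ne_of_lt ?_)
        rw [hRdef, Measure.volume_eq_prod, Measure.prod_prod]
        exact ENNReal.mul_lt_top (by rw [Real.volume_Ioc]; exact ENNReal.ofReal_lt_top)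
          (by rw [Real.volume_Ioc]; exact ENNReal.ofReal_lt_top)
      have hreint : Integrable (fun p => (f p).re) volume := by
        have := hfint.re
        simpa using this
      have hmono := integral_mono hindint hreint hpoint
      have hintR : ∫ p : ℝ×ℝ, R.indicator (fun _ => (t/2:ℝ)) p = (γ^2/8) * (t/2) := by
        rw [integral_indicator_const _ hRmeas]
        rw [hRdef, Measure.volume_eq_prod, measureReal_def, Measure.prod_prod, Real.volume_Ioc, Real.volume_Ioc]
        rw [show N + γ/4 - N = γ/4 by ring, show N + 3*γ/4 - (N + γ/4) = γ/2 by ring]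
        rw [← ENNReal.ofReal_mul (by positivity), ENNReal.toReal_ofReal (by positivity)]
        rw [smul_eq_mul]
        ring
      have hre_eq : ∫ p, (f p).re = (∫ p, f p).re := by
        have := integral_re hfint
        simpa using this
      have hnormint : t*γ^2/16 ≤ ‖∫ p, f p‖ := by
        have h1 : t*γ^2/16 ≤ (∫ p, f p).re := by
          rw [← hre_eq]
          calc t*γ^2/16 = (γ^2/8) * (t/2) := by ring
            _ = ∫ p : ℝ×ℝ, R.indicator (fun _ => (t/2:ℝ)) p := hintR.symm
            _ ≤ ∫ p, (f p).re := hmono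
        calc t*γ^2/16 ≤ (∫ p, f p).re := h1
          _ ≤ |(∫ p, f p).re| := le_abs_self _
          _ ≤ ‖∫ p, f p‖ := Complex.abs_re_le_norm _
          _ = ‖∫ p, f p‖ := rfl
      -- combine with weight
      have hxi1 : N ≤ |ξ| := by
        rw [abs_of_pos (by linarith : (0:ℝ) < ξ)]
        linarith
      have hxi2 : 1 + |ξ| ≤ 3*N := by
        rw [abs_of_pos (by linarith : (0:ℝ) < ξ)]
        linarith
      have h1 : N * (t*γ^2/16) ≤ ‖(ξ:ℂ) * ∫ p, f p‖ := by
        rw [norm_mul, Complex.norm_real, Real.norm_eq_abs]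
        exact mul_le_mul hxi1 hnormint (by positivity) (abs_nonneg _)
      have h2 : (3*N) ^ s ≤ (1+|ξ|) ^ s :=
        Real.rpow_le_rpow_of_nonpos (by positivity) hxi2 (by linarith : s ≤ 0)
      calc c = (3*N)^s * (N*(t*γ^2/16)) := hcdef
        _ ≤ (1+|ξ|)^s * ‖(ξ:ℂ) * ∫ p, f p‖ :=
            mul_le_mul h2 h1 (by positivity) (Real.rpow_nonneg (by positivity) _)
        _ = (1+|ξ|)^s * ‖(ξ:ℂ) * ∫ p : ℝ × ℝ,
              Ig.indicator (fun _ => (1:ℂ)) p.1 * Ih.indicator (fun _ => (1:ℂ)) p.2 *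
              Ih.indicator (fun _ => (1:ℂ)) (ξ - p.1 - p.2) * Efun t (phaseA α ξ p.1 p.2)‖ := rfl
    -- LHS lower bound for the L² norm
    have hSmeas : MeasurableSet S := measurableSet_Ioc
    have hLlow : ENNReal.ofReal (c * (γ/4) ^ ((1:ℝ)/2)) ≤
        eLpNorm (fun ξ : ℝ => (1 + |ξ|) ^ s *
          ‖(ξ:ℂ) * ∫ p : ℝ × ℝ,
              Ig.indicator (fun _ => (1:ℂ)) p.1 * Ih.indicator (fun _ => (1:ℂ)) p.2 *
              Ih.indicator (fun _ => (1:ℂ)) (ξ - p.1 - p.2) * Efun t (phaseA α ξ p.1 p.2)‖)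
          2 volume := by
      have hpt : ∀ x : ℝ, ‖S.indicator (fun _ => c) x‖ ≤
          ‖(1 + |x|) ^ s * ‖(x:ℂ) * ∫ p : ℝ × ℝ,
              Ig.indicator (fun _ => (1:ℂ)) p.1 * Ih.indicator (fun _ => (1:ℂ)) p.2 *
              Ih.indicator (fun _ => (1:ℂ)) (x - p.1 - p.2) * Efun t (phaseA α x p.1 p.2)‖‖ := by
        intro x
        by_cases hx : x ∈ S
        · rw [Set.indicator_of_mem hx, Real.norm_of_nonneg hc0.le]
          have hk := key x hx
          calc c ≤ (1 + |x|) ^ s * ‖(x:ℂ) * ∫ p : ℝ × ℝ,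
                Ig.indicator (fun _ => (1:ℂ)) p.1 * Ih.indicator (fun _ => (1:ℂ)) p.2 *
                Ih.indicator (fun _ => (1:ℂ)) (x - p.1 - p.2) * Efun t (phaseA α x p.1 p.2)‖ := hk
            _ ≤ _ := le_abs_self _
        · rw [Set.indicator_of_notMem hx, norm_zero]
          exact norm_nonneg _
      have hmono := eLpNorm_mono (p := 2) (μ := (volume : Measure ℝ)) hpt
      rw [eLpNorm_indicator_const hSmeas (by norm_num) (by norm_num)] at hmono
      refine le_trans (le_of_eq ?_) hmono
      rw [hSdef, Real.volume_Ioc, show N + 5*γ/4 - (N+γ) = γ/4 by ring]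
      rw [show (1 / (2:ℝ≥0∞).toReal : ℝ) = ((1:ℝ)/2) by norm_num]
      rw [ENNReal.ofReal_rpow_of_pos (by positivity)]
      rw [← ofReal_norm, Real.norm_of_nonneg hc0.le]
      rw [← ENNReal.ofReal_mul hc0.le]
    -- upper bounds for the two factors
    have hNs0 : 0 < N ^ s := Real.rpow_pos_of_pos hN0 s
    have hG : eLpNorm (fun ξ : ℝ => (1+|ξ|)^s * ‖Ig.indicator (fun _ => (1:ℂ)) ξ‖) 2 volume ≤
        ENNReal.ofReal (N ^ s * γ ^ ((1:ℝ)/2)) := by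
      have hpt : ∀ x : ℝ, ‖(1+|x|)^s * ‖Ig.indicator (fun _ => (1:ℂ)) x‖‖ ≤
          ‖Ig.indicator (fun _ => N ^ s) x‖ := by
        intro x
        by_cases hx : x ∈ Ig
        · rw [Set.indicator_of_mem hx, Set.indicator_of_mem hx, norm_one, mul_one,
            Real.norm_of_nonneg (Real.rpow_nonneg (by positivity) _),
            Real.norm_of_nonneg hNs0.le]
          apply Real.rpow_le_rpow_of_nonpos hN0 ?_ (by linarith : s ≤ 0)
          have hx1 : N < x := hx.1
          linarith [le_abs_self x]
        · rw [Set.indicator_of_notMem hx, Set.indicator_of_notMem hx]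
          simp
      have hmono := eLpNorm_mono (p := 2) (μ := (volume : Measure ℝ)) hpt
      rw [eLpNorm_indicator_const hIgmeas (by norm_num) (by norm_num)] at hmono
      refine le_trans hmono (le_of_eq ?_)
      rw [hIgdef, Real.volume_Ioc, show N + γ - N = γ by ring,
        show (1 / (2:ℝ≥0∞).toReal : ℝ) = ((1:ℝ)/2) by norm_num,
        ENNReal.ofReal_rpow_of_pos hγ0, ← ofReal_norm,
        Real.norm_of_nonneg hNs0.le, ← ENNReal.ofReal_mul hNs0.le]
    have hIhvol : volume Ih = ENNReal.ofReal (2*γ) := by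
      have hdisj : Disjoint Ineg Ig := by
        rw [Set.disjoint_left]
        intro x hx1 hx2
        have h1 : x ≤ -N + γ := hx1.2
        have h2 : N < x := hx2.1
        linarith
      rw [hIhdef, measure_union hdisj hIgmeas, hInegdef, hIgdef, Real.volume_Ioc,
        Real.volume_Ioc, show -N + γ - (-N) = γ by ring, show N + γ - N = γ by ring,
        ← ENNReal.ofReal_add hγ0.le hγ0.le]
      congr 1
      ring
    have hH : eLpNorm (fun ξ : ℝ => (1+|ξ|)^s * ‖Ih.indicator (fun _ => (1:ℂ)) ξ‖) 2 volume ≤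
        ENNReal.ofReal (N ^ s * (2*γ) ^ ((1:ℝ)/2)) := by
      have hpt : ∀ x : ℝ, ‖(1+|x|)^s * ‖Ih.indicator (fun _ => (1:ℂ)) x‖‖ ≤
          ‖Ih.indicator (fun _ => N ^ s) x‖ := by
        intro x
        by_cases hx : x ∈ Ih
        · rw [Set.indicator_of_mem hx, Set.indicator_of_mem hx, norm_one, mul_one,
            Real.norm_of_nonneg (Real.rpow_nonneg (by positivity) _),
            Real.norm_of_nonneg hNs0.le]
          apply Real.rpow_le_rpow_of_nonpos hN0 ?_ (by linarith : s ≤ 0)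
          rcases hx with hm | hm
          · have h1 : -N < x := hm.1
            have h2 : x ≤ -N + γ := hm.2
            have h3 : |x| = -x := abs_of_neg (by linarith)
            rw [h3]
            linarith
          · have h1 : N < x := hm.1
            linarith [le_abs_self x]
        · rw [Set.indicator_of_notMem hx, Set.indicator_of_notMem hx]
          simp
      have hmono := eLpNorm_mono (p := 2) (μ := (volume : Measure ℝ)) hpt
      rw [eLpNorm_indicator_const hIhmeas (by norm_num) (by norm_num)] at hmono
      refine le_trans hmono (le_of_eq ?_)
      rw [hIhvol,
        show (1 / (2:ℝ≥0∞).toReal : ℝ) = ((1:ℝ)/2) by norm_num,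
        ENNReal.ofReal_rpow_of_pos (by positivity), ← ofReal_norm,
        Real.norm_of_nonneg hNs0.le, ← ENNReal.ofReal_mul hNs0.le]
    -- combine everything into a real inequality
    have ha0 : (0:ℝ) ≤ N ^ s * γ ^ ((1:ℝ)/2) := by
      have := Real.rpow_nonneg hγ0.le ((1:ℝ)/2)
      positivity
    have hb0 : (0:ℝ) ≤ N ^ s * (2*γ) ^ ((1:ℝ)/2) := by
      have := Real.rpow_nonneg (by positivity : (0:ℝ) ≤ 2*γ) ((1:ℝ)/2)
      positivity
    have hprod : ENNReal.ofReal C *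
        (eLpNorm (fun ξ : ℝ => (1+|ξ|)^s * ‖Ig.indicator (fun _ => (1:ℂ)) ξ‖) 2 volume *
         eLpNorm (fun ξ : ℝ => (1+|ξ|)^s * ‖Ih.indicator (fun _ => (1:ℂ)) ξ‖) 2 volume ^ 2)
        ≤ ENNReal.ofReal (C * ((N^s * γ^((1:ℝ)/2)) * (N^s * (2*γ)^((1:ℝ)/2))^2)) := by
      have hH2 : eLpNorm (fun ξ : ℝ => (1+|ξ|)^s * ‖Ih.indicator (fun _ => (1:ℂ)) ξ‖) 2 volume ^ 2
          ≤ (ENNReal.ofReal (N ^ s * (2*γ) ^ ((1:ℝ)/2)))^2 := pow_le_pow_left' hH 2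
      calc ENNReal.ofReal C *
          (eLpNorm (fun ξ : ℝ => (1+|ξ|)^s * ‖Ig.indicator (fun _ => (1:ℂ)) ξ‖) 2 volume *
           eLpNorm (fun ξ : ℝ => (1+|ξ|)^s * ‖Ih.indicator (fun _ => (1:ℂ)) ξ‖) 2 volume ^ 2)
          ≤ ENNReal.ofReal C * (ENNReal.ofReal (N^s * γ^((1:ℝ)/2)) *
              (ENNReal.ofReal (N ^ s * (2*γ) ^ ((1:ℝ)/2)))^2) :=
            mul_le_mul_right (mul_le_mul' hG hH2) _
        _ = ENNReal.ofReal (C * ((N^s * γ^((1:ℝ)/2)) * (N^s * (2*γ)^((1:ℝ)/2))^2)) := by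
            rw [← ENNReal.ofReal_pow hb0, ← ENNReal.ofReal_mul ha0, ← ENNReal.ofReal_mul hC.le]
    have hfinal := le_trans hLlow (le_trans hle hprod)
    rw [ENNReal.ofReal_le_ofReal_iff (by positivity)] at hfinal
    -- the strict real inequality contradicting hfinal
    have hX0 : (0:ℝ) < γ ^ ((1:ℝ)/2) := Real.rpow_pos_of_pos hγ0 _
    have hX2 : (γ ^ ((1:ℝ)/2))^2 = γ := by
      rw [← Real.rpow_natCast (γ ^ ((1:ℝ)/2)) 2, ← Real.rpow_mul hγ0.le]
      norm_num
    have h2γ : (2*γ) ^ ((1:ℝ)/2) = 2 ^ ((1:ℝ)/2) * γ ^ ((1:ℝ)/2) :=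
      Real.mul_rpow (by norm_num) hγ0.le
    have hQ0 : (0:ℝ) < 2 ^ ((1:ℝ)/2) := Real.rpow_pos_of_pos (by norm_num) _
    have h22 : ((2:ℝ) ^ ((1:ℝ)/2))^2 = 2 := by
      rw [← Real.rpow_natCast ((2:ℝ) ^ ((1:ℝ)/2)) 2, ← Real.rpow_mul (by norm_num : (0:ℝ) ≤ 2)]
      norm_num
    have hγ4 : (γ/4) ^ ((1:ℝ)/2) = γ ^ ((1:ℝ)/2) / 2 := by
      rw [show γ/4 = γ * (1/4) by ring, Real.mul_rpow hγ0.le (by norm_num),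
        show ((1:ℝ)/4) = ((1:ℝ)/2)^(2:ℕ) by norm_num, ← Real.rpow_natCast ((1:ℝ)/2) 2,
        ← Real.rpow_mul (by norm_num : (0:ℝ) ≤ 1/2)]
      norm_num
      ring
    have h3Ns : (3*N) ^ s = 3 ^ s * N ^ s := Real.mul_rpow (by norm_num) hN0.le
    have hNe : (N ^ s)^2 * (N ^ e * N) = 1 := by
      have h1 : (N ^ s)^2 = N ^ (s*2) := by
        rw [← Real.rpow_natCast (N ^ s) 2, ← Real.rpow_mul hN0.le]
        norm_num
      have h2 : N ^ e * N = N ^ (e + 1) := by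
        rw [Real.rpow_add hN0, Real.rpow_one]
      rw [h1, h2, ← Real.rpow_add hN0, show s*2 + (e+1) = 0 by rw [hedef]; ring]
      exact Real.rpow_zero N
    have h64 : 64 * C < 3 ^ s * t * ε * N ^ e := by
      have hKmul : K * (3 ^ s * t * ε) = 64 * C := by
        rw [hKdef]; field_simp
      have := mul_lt_mul_of_pos_right hNK (show (0:ℝ) < 3^s*t*ε by positivity)
      calc 64 * C = K * (3 ^ s * t * ε) := hKmul.symm
        _ < N ^ e * (3 ^ s * t * ε) := this
        _ = 3 ^ s * t * ε * N ^ e := by ring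
    have hmain : 2*C*((N^s)^2*γ) < 3 ^ s * N * t * γ^2 / 32 := by
      have hPN0 : (0:ℝ) < (N^s)^2*N := by positivity
      have k1 : 64*C*((N^s)^2*N) < 3^s*t*ε := by
        calc 64*C*((N^s)^2*N) < (3 ^ s * t * ε * N ^ e)*((N^s)^2*N) :=
              mul_lt_mul_of_pos_right h64 hPN0
          _ = (3 ^ s * t * ε) * ((N ^ s)^2 * (N ^ e * N)) := by ring
          _ = 3^s*t*ε := by rw [hNe]; ring
      calc 2*C*((N^s)^2*γ) = (64*C*((N^s)^2*N)) * (γ/(32*N)) := by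
            field_simp
            ring
        _ < (3^s*t*ε) * (γ/(32*N)) := mul_lt_mul_of_pos_right k1 (by positivity)
        _ = 3 ^ s * N * t * γ^2 / 32 := by
            rw [← hγN2]
            field_simp
    have hreal : C * ((N^s * γ^((1:ℝ)/2)) * (N^s * (2*γ)^((1:ℝ)/2))^2) < c * (γ/4)^((1:ℝ)/2) := by
      rw [hcdef, h3Ns, h2γ, hγ4]
      have hsq : (N^s * (2^((1:ℝ)/2) * γ^((1:ℝ)/2)))^2
          = (N^s)^2 * (((2:ℝ)^((1:ℝ)/2))^2 * (γ^((1:ℝ)/2))^2) := by ring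
      rw [hsq, h22, hX2]
      calc C * ((N^s * γ^((1:ℝ)/2)) * ((N^s)^2 * (2 * γ)))
          = (2*C*((N^s)^2*γ)) * (N^s * γ^((1:ℝ)/2)) := by ring
        _ < (3 ^ s * N * t * γ^2 / 32) * (N^s * γ^((1:ℝ)/2)) :=
            mul_lt_mul_of_pos_right hmain (by positivity)
        _ = 3 ^ s * N ^ s * (N * (t * γ ^ 2 / 16)) * (γ ^ ((1:ℝ)/2) / 2) := by ring
    linarith
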